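/- Let D ≥ 1 and let ζ_0, …, ζ_D be the D+1 distinct (D+1)-th roots of unity. Then the vectors w_ζ := (D+1)·ζ^D·(ζ, 2ζ², 3ζ³, …, Dζ^D) ∈ ℂ^{D} for ζ ∈ {ζ_0,…,ζ_D} span a ℂ-linear subspace of dimension D, and the vectors w'_ζ := (D+1)·ζ^D·(1, ζ/2, ζ²/3, …, ζ^D/(D+1)) ∈ ℂ^{D+1} are linearly independent over ℂ. -/

import Mathlib

open Polynomial Matrix Finset

theorem stmt_5 (D : ℕ) (hD : 1 ≤ D) :
    Module.finrank ℂ (Submodule.span ℂ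
      (Set.range (fun ζ : {ζ : ℂ // ζ ^ (D + 1) = 1} =>
        (fun k : Fin D => ((D : ℂ) + 1) * ζ.1 ^ D * (((k : ℕ) : ℂ) + 1) * ζ.1 ^ ((k : ℕ) + 1))))) = D ∧
    LinearIndependent ℂ (fun ζ : {ζ : ℂ // ζ ^ (D + 1) = 1} =>
      (fun k : Fin (D + 1) => ((D : ℂ) + 1) * ζ.1 ^ D * ζ.1 ^ (k : ℕ) / (((k : ℕ) : ℂ) + 1))) := by
  classical
  have hn : 0 < D + 1 := Nat.succ_pos D
  obtain ⟨μ, hμ⟩ : ∃ μ : ℂ, IsPrimitiveRoot μ (D + 1) :=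
    ⟨_, Complex.isPrimitiveRoot_exp (D + 1) (Nat.succ_ne_zero D)⟩
  have e0 : {ζ : ℂ // ζ ^ (D + 1) = 1} ≃ {x : ℂ // x ∈ nthRootsFinset (D + 1) (1 : ℂ)} :=
    Equiv.subtypeEquivRight fun x => (mem_nthRootsFinset hn (1 : ℂ)).symm
  haveI : Fintype {ζ : ℂ // ζ ^ (D + 1) = 1} := Fintype.ofEquiv _ e0.symm
  have hcardS : Fintype.card {ζ : ℂ // ζ ^ (D + 1) = 1} = D + 1 := by
    rw [Fintype.card_congr e0, Fintype.card_coe, hμ.card_nthRootsFinset]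
  have hζ0 : ∀ ζ : {ζ : ℂ // ζ ^ (D + 1) = 1}, (ζ : ℂ) ≠ 0 := by
    intro ζ h
    have := ζ.2
    rw [h] at this
    simp at this
  have hD1 : ((D : ℂ) + 1) ≠ 0 := by
    have : (((D + 1 : ℕ)) : ℂ) ≠ 0 := Nat.cast_ne_zero.mpr (Nat.succ_ne_zero D)
    push_cast at this
    exact this
  have hk1 : ∀ k : ℕ, (((k : ℕ) : ℂ) + 1) ≠ 0 := by
    intro k
    have : (((k + 1 : ℕ)) : ℂ) ≠ 0 := Nat.cast_ne_zero.mpr (Nat.succ_ne_zero k)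
    push_cast at this
    exact this
  constructor
  · -- part 1
    haveI : Fintype {p : {ζ : ℂ // ζ ^ (D + 1) = 1} // ¬ p.1 = 1} := by infer_instance
    have hcard1 : Fintype.card {p : {ζ : ℂ // ζ ^ (D + 1) = 1} // p.1 = 1} = 1 := by
      refine Fintype.card_eq_one_iff.mpr ⟨⟨⟨1, one_pow _⟩, rfl⟩, fun y => ?_⟩
      exact Subtype.ext (Subtype.ext y.2)
    have hcard' : Fintype.card {p : {ζ : ℂ // ζ ^ (D + 1) = 1} // ¬ p.1 = 1} = D := by
      rw [Fintype.card_subtype_compl, hcardS, hcard1]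
      omega
    have e' : {p : {ζ : ℂ // ζ ^ (D + 1) = 1} // ¬ p.1 = 1} ≃ Fin D :=
      Fintype.equivFinOfCardEq hcard'
    set ηf : Fin D → ℂ := fun i => ((e'.symm i).1 : ℂ) with hηf
    have hηinj : Function.Injective ηf := by
      intro i j h
      exact e'.symm.injective (Subtype.ext (Subtype.ext h))
    have hηne : ∀ i, ηf i ≠ 0 := fun i => hζ0 _
    set v₁ : {ζ : ℂ // ζ ^ (D + 1) = 1} → (Fin D → ℂ) := fun ζ =>
      (fun k : Fin D => ((D : ℂ) + 1) * ζ.1 ^ D * (((k : ℕ) : ℂ) + 1) * ζ.1 ^ ((k : ℕ) + 1)) with hv₁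
    set u : {p : {ζ : ℂ // ζ ^ (D + 1) = 1} // ¬ p.1 = 1} → (Fin D → ℂ) := fun p => v₁ p.1 with hu
    have hui : LinearIndependent ℂ u := by
      rw [← linearIndependent_equiv e'.symm]
      set M : Matrix (Fin D) (Fin D) ℂ :=
        Matrix.of (fun i k => ((((k : ℕ) : ℂ) + 1)) *
          ((Matrix.of fun i k => ((((D : ℂ) + 1) * ηf i ^ D * ηf i)) * (Matrix.vandermonde ηf) i k) i k)) with hM
      have hMeq : (u ∘ e'.symm) = fun i => M i := by
        funext i k
        simp only [hM, hu, hv₁, Function.comp_apply, Matrix.of_apply, Matrix.vandermonde_apply, hηf]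
        ring
      rw [hMeq, show (fun i => M i) = M.row from rfl, Matrix.linearIndependent_rows_iff_isUnit,
        (Matrix.isUnit_iff_isUnit_det M), isUnit_iff_ne_zero, hM,
        Matrix.det_mul_row, Matrix.det_mul_column, Matrix.det_vandermonde]
      refine mul_ne_zero ?_ (mul_ne_zero ?_ ?_)
      · exact Finset.prod_ne_zero_iff.mpr fun k _ => hk1 k
      · exact Finset.prod_ne_zero_iff.mpr fun i _ =>
          mul_ne_zero (mul_ne_zero hD1 (pow_ne_zero _ (hηne i))) (hηne i)
      · refine Finset.prod_ne_zero_iff.mpr fun i _ => Finset.prod_ne_zero_iff.mpr fun j hj => ?_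
        have hij : i ≠ j := (Finset.mem_Ioi.mp hj).ne'.symm
        exact sub_ne_zero.mpr fun h => hij (hηinj h.symm)
    have hsub : Submodule.span ℂ (Set.range u) ≤ Submodule.span ℂ (Set.range v₁) :=
      Submodule.span_mono (by rintro _ ⟨p, rfl⟩; exact ⟨p.1, rfl⟩)
    have h1 : Module.finrank ℂ (Submodule.span ℂ (Set.range u)) = D := by
      rw [finrank_span_eq_card hui, hcard']
    refine le_antisymm ?_ ?_
    · have := Submodule.finrank_le (Submodule.span ℂ (Set.range v₁))
      rwa [Module.finrank_fintype_fun_eq_card, Fintype.card_fin] at this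
    · exact le_trans (le_of_eq h1.symm) (Submodule.finrank_mono hsub)
  · -- part 2
    have e : {ζ : ℂ // ζ ^ (D + 1) = 1} ≃ Fin (D + 1) := Fintype.equivFinOfCardEq hcardS
    set ζf : Fin (D + 1) → ℂ := fun i => ((e.symm i) : ℂ) with hζf
    have hζinj : Function.Injective ζf := fun i j h => e.symm.injective (Subtype.ext h)
    have hζne : ∀ i, ζf i ≠ 0 := fun i => hζ0 _
    rw [← linearIndependent_equiv e.symm]
    set M : Matrix (Fin (D + 1)) (Fin (D + 1)) ℂ :=
      Matrix.of (fun i k => (1 / (((k : ℕ) : ℂ) + 1)) *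
        ((Matrix.of fun i k => (((D : ℂ) + 1) * ζf i ^ D) * (Matrix.vandermonde ζf) i k) i k)) with hM
    have hMeq : ((fun ζ : {ζ : ℂ // ζ ^ (D + 1) = 1} =>
        (fun k : Fin (D + 1) => ((D : ℂ) + 1) * ζ.1 ^ D * ζ.1 ^ (k : ℕ) / (((k : ℕ) : ℂ) + 1))) ∘ e.symm)
        = fun i => M i := by
      funext i k
      simp only [hM, Function.comp_apply, Matrix.of_apply, Matrix.vandermonde_apply, hζf]
      ring
    rw [hMeq, show (fun i => M i) = M.row from rfl, Matrix.linearIndependent_rows_iff_isUnit,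
      (Matrix.isUnit_iff_isUnit_det M), isUnit_iff_ne_zero, hM,
      Matrix.det_mul_row, Matrix.det_mul_column, Matrix.det_vandermonde]
    refine mul_ne_zero ?_ (mul_ne_zero ?_ ?_)
    · exact Finset.prod_ne_zero_iff.mpr fun k _ => one_div_ne_zero (hk1 k)
    · exact Finset.prod_ne_zero_iff.mpr fun i _ => mul_ne_zero hD1 (pow_ne_zero _ (hζne i))
    · refine Finset.prod_ne_zero_iff.mpr fun i _ => Finset.prod_ne_zero_iff.mpr fun j hj => ?_
      have hij : i ≠ j := (Finset.mem_Ioi.mp hj).ne'.symm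
      exact sub_ne_zero.mpr fun h => hij (hζinj h.symm)
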